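/- There exists a universal constant $C>0$ with the following property. Let $\epsilon_0,\epsilon_1,\epsilon_2\in\{-1,+1\}$, let $k_0,k_1,k_2,j_0,j_1,j_2\in\mathbb{Z}$, and let $(\tau_i,\xi_i)\in\mathbb{R}\times(\mathbb{R}^4\setminus\{0\})$ for $i=0,1,2$ satisfy: $\tau_0+\tau_1+\tau_2=0$ and $\xi_0+\xi_1+\xi_2=0$; $2^{k_i}\le|\xi_i|\le 2^{k_i+2}$ for each $i$; $|\tau_i-\epsilon_i|\xi_i||\le 2^{j_i+2}$ for each $i$; the two largest of $k_0,k_1,k_2$ differ by at most $5$; and $j_{\max}\le k_{\min}$, where $j_{\max}=\max(j_0,j_1,j_2)$ and $k_{\min}=\min(k_0,k_1,k_2)$. Then for every pair of distinct indices $i,i'\in\{0,1,2\}$ one has $\big|\epsilon_i\,\hat{\xi_i}-\epsilon_{i'}\,\hat{\xi_{i'}}\big| \le C\,2^{\,k_{\min}-\min(k_i,k_{i'})}\,2^{(j_{\max}-k_{\min})/2}$. -/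

import Mathlib

set_option maxHeartbeats 1000000
open scoped RealInnerProductSpace

lemma cone_key (εa εb εc : ℝ) (hεa : εa = 1 ∨ εa = -1) (hεb : εb = 1 ∨ εb = -1)
    (hεc : εc = 1 ∨ εc = -1)
    (a b c : EuclideanSpace ℝ (Fin 4)) (ha : a ≠ 0) (hb : b ≠ 0)
    (hsum : a + b + c = 0)
    (ka kb kc m M : ℤ)
    (hka : (2:ℝ)^ka ≤ ‖a‖) (hkb : (2:ℝ)^kb ≤ ‖b‖) (hkc : ‖c‖ ≤ (2:ℝ)^(kc+2))
    (hS : |εa * ‖a‖ + εb * ‖b‖ + εc * ‖c‖| ≤ 12 * (2:ℝ)^M)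
    (hMc : M ≤ kc)
    (hE : kc + min ka kb ≤ max ka kb + m + 5) :
    ‖εa • (‖a‖⁻¹ • a) - εb • (‖b‖⁻¹ • b)‖ ≤
      100 * (2:ℝ)^(m - min ka kb) * (2:ℝ)^(((M - m : ℤ) : ℝ)/2) := by
  have hna : (0:ℝ) < ‖a‖ := norm_pos_iff.mpr ha
  have hnb : (0:ℝ) < ‖b‖ := norm_pos_iff.mpr hb
  set D := ‖εa • (‖a‖⁻¹ • a) - εb • (‖b‖⁻¹ • b)‖ with hDdef
  have hD0 : 0 ≤ D := norm_nonneg _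
  set t : ℝ := ⟪a, b⟫ with ht
  -- squared distance formula
  have hDsq : D^2 = 2 - 2*εa*εb*(‖a‖⁻¹*‖b‖⁻¹)*t := by
    rw [hDdef, norm_sub_sq_real]
    have hx : ‖εa • (‖a‖⁻¹ • a)‖^2 = 1 := by
      rw [norm_smul, norm_smul, norm_inv, norm_norm, Real.norm_eq_abs]
      rcases hεa with h|h <;> rw [h] <;>
        simp [inv_mul_cancel₀ hna.ne']
    have hy : ‖εb • (‖b‖⁻¹ • b)‖^2 = 1 := by
      rw [norm_smul, norm_smul, norm_inv, norm_norm, Real.norm_eq_abs]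
      rcases hεb with h|h <;> rw [h] <;>
        simp [inv_mul_cancel₀ hnb.ne']
    have hi : ⟪εa • (‖a‖⁻¹ • a), εb • (‖b‖⁻¹ • b)⟫ = εa*εb*(‖a‖⁻¹*‖b‖⁻¹)*t := by
      rw [real_inner_smul_left, real_inner_smul_left, real_inner_smul_right,
        real_inner_smul_right]
      ring
    rw [hx, hy, hi]; ring
  -- law of cosines combination
  have hcn : ‖c‖^2 = ‖a‖^2 + 2*t + ‖b‖^2 := by
    have hc : c = -(a+b) := eq_neg_of_add_eq_zero_left (by rw [← hsum]; abel)
    rw [hc, norm_neg, norm_add_sq_real]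
  have hkey : ‖a‖*‖b‖*D^2 = |(εa*‖a‖+εb*‖b‖)^2 - ‖c‖^2| := by
    have h1 : (εa*‖a‖+εb*‖b‖)^2 - ‖c‖^2 = (εa*εb) * (‖a‖*‖b‖*D^2) := by
      rw [hcn, hDsq]
      rcases hεa with h|h <;> rcases hεb with h'|h' <;> rw [h, h'] <;>
        field_simp <;> ring
    have h2 : |εa*εb| = 1 := by
      rcases hεa with h|h <;> rcases hεb with h'|h' <;> rw [h, h'] <;> norm_num
    rw [h1, abs_mul, h2, one_mul, abs_of_nonneg (by positivity)]
  -- bound the RHS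
  have h2M : (2:ℝ)^M ≤ (2:ℝ)^kc := zpow_le_zpow_right₀ one_le_two hMc
  have h8 : (2:ℝ)^(kc+2) = 4 * (2:ℝ)^kc := by
    rw [zpow_add₀ (two_ne_zero) kc 2]; norm_num; ring
  have hub : |(εa*‖a‖+εb*‖b‖)^2 - ‖c‖^2| ≤ 240 * ((2:ℝ)^kc * (2:ℝ)^M) := by
    have hM0 : (0:ℝ) < (2:ℝ)^M := by positivity
    have hc0 : (0:ℝ) ≤ ‖c‖ := norm_nonneg _
    rcases hεc with h|h <;> rw [h] at hS
    · have e1 : (εa*‖a‖+εb*‖b‖)^2 - ‖c‖^2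
          = ((εa*‖a‖+εb*‖b‖+1*‖c‖) - 2*‖c‖) * (εa*‖a‖+εb*‖b‖+1*‖c‖) := by ring
      rw [e1, abs_mul]
      have h1 : |(εa*‖a‖+εb*‖b‖+1*‖c‖) - 2*‖c‖| ≤ 20 * (2:ℝ)^kc := by
        calc |(εa*‖a‖+εb*‖b‖+1*‖c‖) - 2*‖c‖|
            ≤ |εa*‖a‖+εb*‖b‖+1*‖c‖| + |2*‖c‖| := abs_sub _ _
          _ ≤ 12*(2:ℝ)^M + 2*‖c‖ := by
              rw [abs_of_nonneg (by positivity : (0:ℝ) ≤ 2*‖c‖)]; linarith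
          _ ≤ 12*(2:ℝ)^kc + 2*(4*(2:ℝ)^kc) := by
              have := hkc; rw [h8] at this; nlinarith
          _ = 20 * (2:ℝ)^kc := by ring
      calc |(εa*‖a‖+εb*‖b‖+1*‖c‖) - 2*‖c‖| * |εa*‖a‖+εb*‖b‖+1*‖c‖|
          ≤ (20 * (2:ℝ)^kc) * (12*(2:ℝ)^M) :=
            mul_le_mul h1 hS (abs_nonneg _) (by positivity)
        _ = 240 * ((2:ℝ)^kc * (2:ℝ)^M) := by ring
    · have e1 : (εa*‖a‖+εb*‖b‖)^2 - ‖c‖^2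
          = (εa*‖a‖+εb*‖b‖+(-1)*‖c‖) * ((εa*‖a‖+εb*‖b‖+(-1)*‖c‖) + 2*‖c‖) := by ring
      rw [e1, abs_mul]
      have h1 : |(εa*‖a‖+εb*‖b‖+(-1)*‖c‖) + 2*‖c‖| ≤ 20 * (2:ℝ)^kc := by
        calc |(εa*‖a‖+εb*‖b‖+(-1)*‖c‖) + 2*‖c‖|
            ≤ |εa*‖a‖+εb*‖b‖+(-1)*‖c‖| + |2*‖c‖| := abs_add_le _ _
          _ ≤ 12*(2:ℝ)^M + 2*‖c‖ := by
              rw [abs_of_nonneg (by positivity : (0:ℝ) ≤ 2*‖c‖)]; linarith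
          _ ≤ 12*(2:ℝ)^kc + 2*(4*(2:ℝ)^kc) := by
              have := hkc; rw [h8] at this; nlinarith
          _ = 20 * (2:ℝ)^kc := by ring
      calc |εa*‖a‖+εb*‖b‖+(-1)*‖c‖| * |(εa*‖a‖+εb*‖b‖+(-1)*‖c‖) + 2*‖c‖|
          ≤ (12*(2:ℝ)^M) * (20 * (2:ℝ)^kc) :=
            mul_le_mul hS h1 (abs_nonneg _) (by positivity)
        _ = 240 * ((2:ℝ)^kc * (2:ℝ)^M) := by ring
  -- D^2 bound
  have hDsq_le : D^2 ≤ 240 * (2:ℝ)^(kc + M - ka - kb) := by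
    have hP : (0:ℝ) < (2:ℝ)^ka * (2:ℝ)^kb := by positivity
    rw [← mul_le_mul_iff_of_pos_right hP]
    have h2 : (2:ℝ)^ka * (2:ℝ)^kb ≤ ‖a‖*‖b‖ :=
      mul_le_mul hka hkb (by positivity) hna.le
    have hpow : (2:ℝ)^(kc + M - ka - kb) * ((2:ℝ)^ka * (2:ℝ)^kb) = (2:ℝ)^kc * (2:ℝ)^M := by
      rw [← zpow_add₀ (two_ne_zero (α := ℝ)), ← zpow_add₀ (two_ne_zero (α := ℝ)),
        ← zpow_add₀ (two_ne_zero (α := ℝ))]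
      congr 1; ring
    calc D^2 * ((2:ℝ)^ka * (2:ℝ)^kb)
        ≤ ‖a‖*‖b‖*D^2 := by nlinarith [sq_nonneg D]
      _ = |(εa*‖a‖+εb*‖b‖)^2 - ‖c‖^2| := hkey
      _ ≤ 240 * ((2:ℝ)^kc * (2:ℝ)^M) := hub
      _ = 240 * (2:ℝ)^(kc + M - ka - kb) * ((2:ℝ)^ka * (2:ℝ)^kb) := by
          rw [mul_assoc, hpow]
  -- compare with target
  set R := 100 * (2:ℝ)^(m - min ka kb) * (2:ℝ)^(((M - m : ℤ) : ℝ)/2) with hRdef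
  have hR0 : 0 ≤ R := by positivity
  have hRsq : R^2 = 10000 * (2:ℝ)^(2*(m - min ka kb) + (M - m)) := by
    have h1 : ((2:ℝ) ^ (((M - m : ℤ):ℝ)/2))^2 = (2:ℝ)^((M - m : ℤ)) := by
      rw [← Real.rpow_natCast ((2:ℝ)^(((M - m : ℤ):ℝ)/2)) 2,
        ← Real.rpow_mul (by norm_num),
        show ((M - m : ℤ):ℝ)/2 * ((2:ℕ):ℝ) = ((M - m : ℤ):ℝ) from by push_cast; ring,
        Real.rpow_intCast]
    have h2 : ((2:ℝ)^(m - min ka kb))^2 = (2:ℝ)^(2*(m - min ka kb)) := by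
      rw [pow_two, ← zpow_add₀ (two_ne_zero (α := ℝ))]
      congr 1; ring
    calc R^2 = 10000 * ((2:ℝ)^(m - min ka kb))^2 * ((2:ℝ) ^ (((M - m : ℤ):ℝ)/2))^2 := by
          rw [hRdef]; ring
      _ = 10000 * (2:ℝ)^(2*(m - min ka kb) + (M - m)) := by
          rw [h1, h2, mul_assoc, ← zpow_add₀ (two_ne_zero (α := ℝ))]
  have hfin : 240 * (2:ℝ)^(kc + M - ka - kb) ≤ R^2 := by
    rw [hRsq]
    have hexp : kc + M - ka - kb ≤ 2*(m - min ka kb) + (M - m) + 5 := by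
      have := min_add_max ka kb
      omega
    have h1 : (2:ℝ)^(kc + M - ka - kb) ≤ (2:ℝ)^(2*(m - min ka kb) + (M - m) + 5) :=
      zpow_le_zpow_right₀ one_le_two hexp
    have h2 : (2:ℝ)^(2*(m - min ka kb) + (M - m) + 5)
        = 32 * (2:ℝ)^(2*(m - min ka kb) + (M - m)) := by
      rw [zpow_add₀ (two_ne_zero (α := ℝ))]; norm_num; ring
    rw [h2] at h1
    have h3 : (0:ℝ) < (2:ℝ)^(2*(m - min ka kb) + (M - m)) := by positivity
    nlinarith
  calc D = Real.sqrt (D^2) := (Real.sqrt_sq hD0).symm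
    _ ≤ Real.sqrt (R^2) := Real.sqrt_le_sqrt (hDsq_le.trans hfin)
    _ = R := Real.sqrt_sq hR0

/-- **Geometry of the cone** (pointwise form).  There is a universal constant `C > 0` such
that for any signs `ε i ∈ {±1}`, integers `k i`, `j i`, and space-time frequencies
`(τ i, ξ i)` with `ξ i ≠ 0` summing to zero, localized as `2^(k i) ≤ ‖ξ i‖ ≤ 2^(k i + 2)` and
`|τ i - ε i ‖ξ i‖| ≤ 2^(j i + 2)`, with the two largest of the `k i` within `5` of each other
and `max j ≤ min k`, the angular distances `|ε i ξ̂ i - ε i' ξ̂ i'|` obey the stated bound. -/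
theorem geometry_of_the_cone :
    ∃ C : ℝ, 0 < C ∧
      ∀ (ε : Fin 3 → ℝ) (k j : Fin 3 → ℤ) (τ : Fin 3 → ℝ)
        (ξ : Fin 3 → EuclideanSpace ℝ (Fin 4)),
        (∀ i, ε i = 1 ∨ ε i = -1) →
        (∀ i, ξ i ≠ 0) →
        τ 0 + τ 1 + τ 2 = 0 →
        ξ 0 + ξ 1 + ξ 2 = 0 →
        (∀ i, (2:ℝ) ^ (k i) ≤ ‖ξ i‖ ∧ ‖ξ i‖ ≤ (2:ℝ) ^ (k i + 2)) →
        (∀ i, |τ i - ε i * ‖ξ i‖| ≤ (2:ℝ) ^ (j i + 2)) →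
        (∃ i i' : Fin 3, i ≠ i' ∧
          max (k 0) (max (k 1) (k 2)) - k i ≤ 5 ∧
          max (k 0) (max (k 1) (k 2)) - k i' ≤ 5) →
        max (j 0) (max (j 1) (j 2)) ≤ min (k 0) (min (k 1) (k 2)) →
        ∀ i i' : Fin 3, i ≠ i' →
          ‖ε i • (‖ξ i‖⁻¹ • ξ i) - ε i' • (‖ξ i'‖⁻¹ • ξ i')‖ ≤
            C * (2:ℝ) ^ (min (k 0) (min (k 1) (k 2)) - min (k i) (k i'))
              * (2:ℝ) ^ ((((max (j 0) (max (j 1) (j 2))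
                  - min (k 0) (min (k 1) (k 2))) : ℤ) : ℝ) / 2) := by
  refine ⟨100, by norm_num, ?_⟩
  intro ε k j τ ξ hε hξ0 hτsum hξsum hnorm hτ htop hjk i i' hii'
  set m : ℤ := min (k 0) (min (k 1) (k 2)) with hm
  set M : ℤ := max (j 0) (max (j 1) (j 2)) with hM
  -- the sum of signed norms is small
  have hS0 : |ε 0 * ‖ξ 0‖ + ε 1 * ‖ξ 1‖ + ε 2 * ‖ξ 2‖| ≤ 12 * (2:ℝ)^M := by
    have e : ε 0*‖ξ 0‖ + ε 1*‖ξ 1‖ + ε 2*‖ξ 2‖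
        = -((τ 0 - ε 0*‖ξ 0‖) + (τ 1 - ε 1*‖ξ 1‖) + (τ 2 - ε 2*‖ξ 2‖)) := by
      linarith [hτsum]
    have hji : ∀ p : Fin 3, (2:ℝ)^(j p + 2) ≤ 4 * (2:ℝ)^M := by
      intro p
      have hjle : j p ≤ M := by
        have h0 : j 0 ≤ M := le_of_le_of_eq (le_max_left _ _) hM.symm
        have h1 : j 1 ≤ M :=
          le_of_le_of_eq ((le_max_left _ _).trans (le_max_right _ _)) hM.symm
        have h2 : j 2 ≤ M :=
          le_of_le_of_eq ((le_max_right _ _).trans (le_max_right _ _)) hM.symm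
        fin_cases p <;> assumption
      have h1 : (2:ℝ)^(j p + 2) = 4 * (2:ℝ)^(j p) := by
        rw [zpow_add₀ (two_ne_zero (α := ℝ))]; norm_num; ring
      rw [h1]
      have := zpow_le_zpow_right₀ (one_le_two (α := ℝ)) hjle
      linarith
    calc |ε 0*‖ξ 0‖ + ε 1*‖ξ 1‖ + ε 2*‖ξ 2‖|
        = |(τ 0 - ε 0*‖ξ 0‖) + (τ 1 - ε 1*‖ξ 1‖) + (τ 2 - ε 2*‖ξ 2‖)| := by
          rw [e, abs_neg]
      _ ≤ |τ 0 - ε 0*‖ξ 0‖| + |τ 1 - ε 1*‖ξ 1‖| + |τ 2 - ε 2*‖ξ 2‖| :=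
          (abs_add_three _ _ _)
      _ ≤ (2:ℝ)^(j 0 + 2) + (2:ℝ)^(j 1 + 2) + (2:ℝ)^(j 2 + 2) := by
          have := hτ 0; have := hτ 1; have := hτ 2; linarith
      _ ≤ 12 * (2:ℝ)^M := by
          have := hji 0; have := hji 1; have := hji 2; linarith
  -- extract the "two largest within 5" data into a concrete disjunction
  have htop' : (max (k 0) (max (k 1) (k 2)) - k 0 ≤ 5 ∧ max (k 0) (max (k 1) (k 2)) - k 1 ≤ 5)
      ∨ (max (k 0) (max (k 1) (k 2)) - k 0 ≤ 5 ∧ max (k 0) (max (k 1) (k 2)) - k 2 ≤ 5)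
      ∨ (max (k 0) (max (k 1) (k 2)) - k 1 ≤ 5 ∧ max (k 0) (max (k 1) (k 2)) - k 2 ≤ 5) := by
    obtain ⟨p, q, hpq, hp5, hq5⟩ := htop
    fin_cases p <;> fin_cases q <;>
      first
        | exact absurd rfl hpq
        | tauto
  have key : ∀ p q r : Fin 3, ξ p + ξ q + ξ r = 0 →
      ε p*‖ξ p‖ + ε q*‖ξ q‖ + ε r*‖ξ r‖ = ε 0*‖ξ 0‖ + ε 1*‖ξ 1‖ + ε 2*‖ξ 2‖ →
      (k r + min (k p) (k q) ≤ max (k p) (k q) + m + 5) →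
      M ≤ k r →
      ‖ε p • (‖ξ p‖⁻¹ • ξ p) - ε q • (‖ξ q‖⁻¹ • ξ q)‖ ≤
        100 * (2:ℝ)^(m - min (k p) (k q)) * (2:ℝ)^(((M - m : ℤ):ℝ)/2) := by
    intro p q r hsum hSeq hE hMr
    exact cone_key (ε p) (ε q) (ε r) (hε p) (hε q) (hε r) (ξ p) (ξ q) (ξ r)
      (hξ0 p) (hξ0 q) hsum (k p) (k q) (k r) m M (hnorm p).1 (hnorm q).1 (hnorm r).2
      (by rw [hSeq]; exact hS0) hMr hE
  have hMm : M ≤ m := hjk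
  have hm0 : m ≤ k 0 := by omega
  have hm1 : m ≤ k 1 := by omega
  have hm2 : m ≤ k 2 := by omega
  fin_cases i <;> fin_cases i' <;> simp only [Fin.isValue] at hii' ⊢ <;>
    first
      | exact absurd rfl hii'
      | skip
  · exact key 0 1 2 hξsum (by ring) (by omega) (by omega)
  · exact key 0 2 1 (by rw [show ξ 0 + ξ 2 + ξ 1 = ξ 0 + ξ 1 + ξ 2 from by abel]; exact hξsum)
      (by ring) (by omega) (by omega)
  · exact key 1 0 2 (by rw [show ξ 1 + ξ 0 + ξ 2 = ξ 0 + ξ 1 + ξ 2 from by abel]; exact hξsum)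
      (by ring) (by omega) (by omega)
  · exact key 1 2 0 (by rw [show ξ 1 + ξ 2 + ξ 0 = ξ 0 + ξ 1 + ξ 2 from by abel]; exact hξsum)
      (by ring) (by omega) (by omega)
  · exact key 2 0 1 (by rw [show ξ 2 + ξ 0 + ξ 1 = ξ 0 + ξ 1 + ξ 2 from by abel]; exact hξsum)
      (by ring) (by omega) (by omega)
  · exact key 2 1 0 (by rw [show ξ 2 + ξ 1 + ξ 0 = ξ 0 + ξ 1 + ξ 2 from by abel]; exact hξsum)
      (by ring) (by omega) (by omega)
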